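/- Fix a₀ ∈ ℝ. Let θ₁, θ₂ : ℝ → ℝ be continuous, nonnegative, and even. Suppose that μ_{θ₁}[f₀; a₀] = μ_{θ₂}[f₀; a₀] for every two-bump initial density f₀ with parameters a₀, c, w, ranging over all c, w with 0 < w < c. Then θ₁ = θ₂. (In other words, measurements of the initial rate of change of the sub-threshold opinion fraction at the single fixed threshold a₀, taken over all two-bump initial opinion densities, uniquely determine the interaction kernel.) -/

import Mathlib

open MeasureTheory Set

/-- The measurement bracket `Ψ_a(x₁,x₂) = 2·𝟙[(x₁+x₂)/2 ≤ a] − 𝟙[x₁ ≤ a] − 𝟙[x₂ ≤ a]`. -/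
noncomputable def Psi (a x₁ x₂ : ℝ) : ℝ :=
  2 * (if (x₁ + x₂) / 2 ≤ a then (1 : ℝ) else 0)
    - (if x₁ ≤ a then (1 : ℝ) else 0) - (if x₂ ≤ a then (1 : ℝ) else 0)

/-- The initial measurement rate `μ_θ[f₀; a]`. -/
noncomputable def mu (θ f₀ : ℝ → ℝ) (a : ℝ) : ℝ :=
  ∫ p : ℝ × ℝ, θ (p.1 - p.2) * f₀ p.1 * f₀ p.2 * Psi a p.1 p.2

/-- The two-bump initial density with parameters `a`, `c`, `w`. -/
noncomputable def twoBump (a c w x : ℝ) : ℝ :=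
  (1 / (2 * w)) * ((Set.Ioo (a - c - w) (a - c)).indicator 1 x
    + (Set.Ioo (a + c - w) (a + c)).indicator 1 x)

/-- Pointwise identity: the integrand of `mu` for a two-bump density equals a constant
times the indicator of the union of the two cross product rectangles. -/
lemma stmt4_pointwise (θ : ℝ → ℝ) (a c w : ℝ) (hw : 0 < w) (hwc : w < c) (x₁ x₂ : ℝ) :
    θ (x₁ - x₂) * twoBump a c w x₁ * twoBump a c w x₂ * Psi a x₁ x₂
      = (1/(4*w^2)) *
        (((Ioo (a-c-w) (a-c)) ×ˢ (Ioo (a+c-w) (a+c)) ∪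
          (Ioo (a+c-w) (a+c)) ×ˢ (Ioo (a-c-w) (a-c))).indicator
          (fun p => θ (p.1 - p.2)) (x₁, x₂)) := by
  have hc : 0 < c := hw.trans hwc
  set L := Ioo (a-c-w) (a-c) with hL
  set R := Ioo (a+c-w) (a+c) with hR
  have hdisj : ∀ x : ℝ, x ∈ L → x ∉ R := by
    intro x hx hx'
    rw [hL, mem_Ioo] at hx; rw [hR, mem_Ioo] at hx'
    linarith [hx.2, hx'.1]
  have tri : ∀ x : ℝ, x ∈ L ∨ x ∈ R ∨ (x ∉ L ∧ x ∉ R) := by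
    intro x; by_cases h : x ∈ L
    · exact Or.inl h
    · by_cases h' : x ∈ R
      · exact Or.inr (Or.inl h')
      · exact Or.inr (Or.inr ⟨h, h'⟩)
  have hbump : ∀ x : ℝ, twoBump a c w x = (1/(2*w)) * (L.indicator 1 x + R.indicator 1 x) := by
    intro x; rfl
  rcases tri x₁ with h1 | h1 | h1 <;> rcases tri x₂ with h2 | h2 | h2
  · -- L L : Psi = 0
    have hm : (x₁, x₂) ∉ (L ×ˢ R ∪ R ×ˢ L) := by
      simp only [mem_union, mem_prod, not_or, not_and_or]
      exact ⟨Or.inr (hdisj _ h2), Or.inl (hdisj _ h1)⟩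
    rw [indicator_of_notMem hm]
    have e1 := h1; have e2 := h2
    rw [hL, mem_Ioo] at e1 e2
    have : Psi a x₁ x₂ = 0 := by
      unfold Psi
      rw [if_pos (by linarith [e1.2, e2.2] : (x₁ + x₂)/2 ≤ a),
          if_pos (by linarith [e1.2] : x₁ ≤ a), if_pos (by linarith [e2.2] : x₂ ≤ a)]
      ring
    rw [this]; ring
  · -- L R : Psi = 1, mem
    have hm : (x₁, x₂) ∈ (L ×ˢ R ∪ R ×ˢ L) := Or.inl ⟨h1, h2⟩
    rw [indicator_of_mem hm]
    have e1 := h1; have e2 := h2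
    rw [hL, mem_Ioo] at e1; rw [hR, mem_Ioo] at e2
    have hpsi : Psi a x₁ x₂ = 1 := by
      unfold Psi
      rw [if_pos (by linarith [e1.2, e2.2] : (x₁ + x₂)/2 ≤ a),
          if_pos (by linarith [e1.2] : x₁ ≤ a), if_neg (by push_neg; linarith [e2.1] : ¬ x₂ ≤ a)]
      ring
    rw [hbump x₁, hbump x₂, hpsi, indicator_of_mem h1, indicator_of_mem h2,
        indicator_of_notMem (hdisj _ h1), indicator_of_notMem (fun hx => hdisj _ hx h2)]
    simp only [Pi.one_apply]
    have hw' : (w:ℝ) ≠ 0 := ne_of_gt hw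
    field_simp
    try ring
    try tauto
  · -- L N
    have hm : (x₁, x₂) ∉ (L ×ˢ R ∪ R ×ˢ L) := by
      simp only [mem_union, mem_prod, not_or, not_and_or]
      exact ⟨Or.inr h2.2, Or.inr h2.1⟩
    rw [indicator_of_notMem hm, hbump x₂, indicator_of_notMem h2.1, indicator_of_notMem h2.2]
    ring
  · -- R L : Psi = 1, mem
    have hm : (x₁, x₂) ∈ (L ×ˢ R ∪ R ×ˢ L) := Or.inr ⟨h1, h2⟩
    rw [indicator_of_mem hm]
    have e1 := h1; have e2 := h2
    rw [hR, mem_Ioo] at e1; rw [hL, mem_Ioo] at e2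
    have hpsi : Psi a x₁ x₂ = 1 := by
      unfold Psi
      rw [if_pos (by linarith [e1.2, e2.2] : (x₁ + x₂)/2 ≤ a),
          if_neg (by push_neg; linarith [e1.1] : ¬ x₁ ≤ a), if_pos (by linarith [e2.2] : x₂ ≤ a)]
      ring
    rw [hbump x₁, hbump x₂, hpsi, indicator_of_mem h1, indicator_of_mem h2,
        indicator_of_notMem (fun hx => hdisj _ hx h1), indicator_of_notMem (hdisj _ h2)]
    simp only [Pi.one_apply]
    have hw' : (w:ℝ) ≠ 0 := ne_of_gt hw
    field_simp
    try ring
    try tauto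
  · -- R R : Psi = 0
    have hm : (x₁, x₂) ∉ (L ×ˢ R ∪ R ×ˢ L) := by
      simp only [mem_union, mem_prod, not_or, not_and_or]
      exact ⟨Or.inl (fun hx => hdisj _ hx h1), Or.inr (fun hx => hdisj _ hx h2)⟩
    rw [indicator_of_notMem hm]
    have e1 := h1; have e2 := h2
    rw [hR, mem_Ioo] at e1 e2
    have : Psi a x₁ x₂ = 0 := by
      unfold Psi
      rw [if_neg (by push_neg; linarith [e1.1, e2.1] : ¬ (x₁ + x₂)/2 ≤ a),
          if_neg (by push_neg; linarith [e1.1] : ¬ x₁ ≤ a),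
          if_neg (by push_neg; linarith [e2.1] : ¬ x₂ ≤ a)]
      ring
    rw [this]; ring
  · -- R N
    have hm : (x₁, x₂) ∉ (L ×ˢ R ∪ R ×ˢ L) := by
      simp only [mem_union, mem_prod, not_or, not_and_or]
      exact ⟨Or.inr h2.2, Or.inr h2.1⟩
    rw [indicator_of_notMem hm, hbump x₂, indicator_of_notMem h2.1, indicator_of_notMem h2.2]
    ring
  all_goals {
    have hm : (x₁, x₂) ∉ (L ×ˢ R ∪ R ×ˢ L) := by
      simp only [mem_union, mem_prod, not_or, not_and_or]
      exact ⟨Or.inl h1.1, Or.inl h1.2⟩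
    rw [indicator_of_notMem hm, hbump x₁, indicator_of_notMem h1.1, indicator_of_notMem h1.2]
    ring }

/-- Computation of `mu` for a two-bump density. -/
lemma stmt4_mu_eq (θ : ℝ → ℝ) (a c w : ℝ) (hw : 0 < w) (hwc : w < c) :
    mu θ (twoBump a c w) a = (1/(4*w^2)) *
      ∫ p in ((Ioo (a-c-w) (a-c)) ×ˢ (Ioo (a+c-w) (a+c)) ∪
        (Ioo (a+c-w) (a+c)) ×ˢ (Ioo (a-c-w) (a-c))), θ (p.1 - p.2) := by
  have hS : MeasurableSet ((Ioo (a-c-w) (a-c)) ×ˢ (Ioo (a+c-w) (a+c)) ∪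
      (Ioo (a+c-w) (a+c)) ×ˢ (Ioo (a-c-w) (a-c))) :=
    (measurableSet_Ioo.prod measurableSet_Ioo).union (measurableSet_Ioo.prod measurableSet_Ioo)
  unfold mu
  rw [show (fun p : ℝ × ℝ => θ (p.1 - p.2) * twoBump a c w p.1 * twoBump a c w p.2 * Psi a p.1 p.2)
      = fun p : ℝ × ℝ => (1/(4*w^2)) *
        (((Ioo (a-c-w) (a-c)) ×ˢ (Ioo (a+c-w) (a+c)) ∪
          (Ioo (a+c-w) (a+c)) ×ˢ (Ioo (a-c-w) (a-c))).indicator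
          (fun p => θ (p.1 - p.2)) p)
      from funext fun p => stmt4_pointwise θ a c w hw hwc p.1 p.2,
      integral_const_mul, integral_indicator hS]

lemma stmt4_integrableOn (θ : ℝ → ℝ) (hθ : Continuous θ) (a c w : ℝ) (hw : 0 < w) (hwc : w < c) :
    IntegrableOn (fun p : ℝ × ℝ => θ (p.1 - p.2))
      ((Ioo (a-c-w) (a-c)) ×ˢ (Ioo (a+c-w) (a+c)) ∪
        (Ioo (a+c-w) (a+c)) ×ˢ (Ioo (a-c-w) (a-c))) := by
  have hK : IsCompact ((Icc (a-c-w) (a+c)) ×ˢ (Icc (a-c-w) (a+c)) : Set (ℝ × ℝ)) :=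
    isCompact_Icc.prod isCompact_Icc
  have hcont : Continuous (fun p : ℝ × ℝ => θ (p.1 - p.2)) :=
    hθ.comp (continuous_fst.sub continuous_snd)
  refine (hcont.locallyIntegrable.integrableOn_isCompact hK).mono_set ?_
  have hLsub : Ioo (a-c-w) (a-c) ⊆ Icc (a-c-w) (a+c) :=
    Ioo_subset_Icc_self.trans (Icc_subset_Icc le_rfl (by linarith [hw.trans hwc]))
  have hRsub : Ioo (a+c-w) (a+c) ⊆ Icc (a-c-w) (a+c) :=
    Ioo_subset_Icc_self.trans (Icc_subset_Icc (by linarith) le_rfl)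
  exact union_subset (prod_mono hLsub hRsub) (prod_mono hRsub hLsub)

/-- Key positivity lemma: if an even continuous function has vanishing cross integrals
for all admissible parameters, it cannot be positive at any positive point. -/
lemma stmt4_key (a : ℝ) (g : ℝ → ℝ) (hc : Continuous g) (he : ∀ r, g (-r) = g r)
    (hint : ∀ c w : ℝ, 0 < w → w < c →
      (∫ p in ((Ioo (a-c-w) (a-c)) ×ˢ (Ioo (a+c-w) (a+c)) ∪
        (Ioo (a+c-w) (a+c)) ×ˢ (Ioo (a-c-w) (a-c))), g (p.1 - p.2)) = 0)
    (s : ℝ) (hs : 0 < s) (hpos : 0 < g s) : False := by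
  obtain ⟨δ, hδ, hδ2⟩ := Metric.continuous_iff.mp hc s (g s / 2) (half_pos hpos)
  set c := s / 2 with hcdef
  have hc0 : 0 < c := by positivity
  set w := min δ c / 2 with hwdef
  have hw : 0 < w := by positivity
  have hwc : w < c := by
    have h := min_le_right δ c
    rw [hwdef]; linarith
  have hwδ : w < δ := by
    have h := min_le_left δ c
    rw [hwdef]; linarith
  have hs2c : s = 2 * c := by rw [hcdef]; ring
  set S := ((Ioo (a-c-w) (a-c)) ×ˢ (Ioo (a+c-w) (a+c)) ∪
      (Ioo (a+c-w) (a+c)) ×ˢ (Ioo (a-c-w) (a-c))) with hSdef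
  have hSm : MeasurableSet S :=
    (measurableSet_Ioo.prod measurableSet_Ioo).union (measurableSet_Ioo.prod measurableSet_Ioo)
  have key2 : ∀ r : ℝ, |r - s| < δ → g s / 2 ≤ g r := by
    intro r hr
    have h1 := hδ2 r (by rwa [Real.dist_eq])
    rw [Real.dist_eq] at h1
    have h2 := abs_lt.mp h1
    linarith [h2.1]
  have hlow : ∀ p ∈ S, g s / 2 ≤ g (p.1 - p.2) := by
    intro p hp
    rcases hp with hp | hp
    · obtain ⟨h1, h2⟩ := hp
      rw [mem_Ioo] at h1 h2
      have heq : g (p.1 - p.2) = g (p.2 - p.1) := by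
        rw [← he (p.2 - p.1)]; congr 1; ring
      rw [heq]
      exact key2 _ (abs_lt.mpr ⟨by linarith [h1.1, h2.2], by linarith [h1.2, h2.1]⟩)
    · obtain ⟨h1, h2⟩ := hp
      rw [mem_Ioo] at h1 h2
      exact key2 _ (abs_lt.mpr ⟨by linarith [h1.1, h2.2], by linarith [h1.2, h2.1]⟩)
  have hKsub : S ⊆ (Icc (a-c-w) (a+c)) ×ˢ (Icc (a-c-w) (a+c)) := by
    have hLsub : Ioo (a-c-w) (a-c) ⊆ Icc (a-c-w) (a+c) :=
      Ioo_subset_Icc_self.trans (Icc_subset_Icc le_rfl (by linarith))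
    have hRsub : Ioo (a+c-w) (a+c) ⊆ Icc (a-c-w) (a+c) :=
      Ioo_subset_Icc_self.trans (Icc_subset_Icc (by linarith) le_rfl)
    exact union_subset (prod_mono hLsub hRsub) (prod_mono hRsub hLsub)
  have hfin : volume S < ⊤ :=
    lt_of_le_of_lt (measure_mono hKsub) (isCompact_Icc.prod isCompact_Icc).measure_lt_top
  have hSpos : 0 < volume S := by
    refine lt_of_lt_of_le ?_ (measure_mono subset_union_left)
    refine (isOpen_Ioo.prod isOpen_Ioo).measure_pos volume ?_
    refine ⟨(a - c - w/2, a + c - w/2), ?_, ?_⟩ <;> rw [mem_Ioo] <;> constructor <;> linarith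
  have hcont : Continuous (fun p : ℝ × ℝ => g (p.1 - p.2)) :=
    hc.comp (continuous_fst.sub continuous_snd)
  have hInt : IntegrableOn (fun p : ℝ × ℝ => g (p.1 - p.2)) S :=
    (hcont.locallyIntegrable.integrableOn_isCompact
      (isCompact_Icc.prod isCompact_Icc)).mono_set hKsub
  have hconstInt : IntegrableOn (fun _ : ℝ × ℝ => g s / 2) S :=
    (integrableOn_const_iff).mpr (Or.inr hfin)
  have hmono : (∫ _ in S, g s / 2) ≤ ∫ p in S, g (p.1 - p.2) :=
    setIntegral_mono_on hconstInt hInt hSm hlow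
  rw [setIntegral_const, hint c w hw hwc] at hmono
  have htr : 0 < (volume S).toReal := ENNReal.toReal_pos (ne_of_gt hSpos) (ne_of_lt hfin)
  have : 0 < (volume S).toReal • (g s / 2) := by
    rw [smul_eq_mul]; positivity
  rw [measureReal_def] at hmono
  linarith

theorem stmt4 (a₀ : ℝ) (θ₁ θ₂ : ℝ → ℝ)
    (hθ₁c : Continuous θ₁) (hθ₁nn : ∀ r, 0 ≤ θ₁ r) (hθ₁e : ∀ r, θ₁ (-r) = θ₁ r)
    (hθ₂c : Continuous θ₂) (hθ₂nn : ∀ r, 0 ≤ θ₂ r) (hθ₂e : ∀ r, θ₂ (-r) = θ₂ r)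
    (hdata : ∀ c w : ℝ, 0 < w → w < c →
      mu θ₁ (twoBump a₀ c w) a₀ = mu θ₂ (twoBump a₀ c w) a₀) :
    θ₁ = θ₂ := by
  set g : ℝ → ℝ := fun r => θ₁ r - θ₂ r with hgdef
  have gc : Continuous g := hθ₁c.sub hθ₂c
  have ge : ∀ r, g (-r) = g r := by
    intro r; simp only [hgdef, hθ₁e r, hθ₂e r]
  have hint : ∀ c w : ℝ, 0 < w → w < c →
      (∫ p in ((Ioo (a₀-c-w) (a₀-c)) ×ˢ (Ioo (a₀+c-w) (a₀+c)) ∪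
        (Ioo (a₀+c-w) (a₀+c)) ×ˢ (Ioo (a₀-c-w) (a₀-c))), g (p.1 - p.2)) = 0 := by
    intro c w hw hwc
    have h1 := stmt4_mu_eq θ₁ a₀ c w hw hwc
    have h2 := stmt4_mu_eq θ₂ a₀ c w hw hwc
    have hd := hdata c w hw hwc
    rw [h1, h2] at hd
    have hwne : (1/(4*w^2) : ℝ) ≠ 0 := by positivity
    have heq := mul_left_cancel₀ hwne hd
    have hI1 := stmt4_integrableOn θ₁ hθ₁c a₀ c w hw hwc
    have hI2 := stmt4_integrableOn θ₂ hθ₂c a₀ c w hw hwc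
    calc (∫ p in ((Ioo (a₀-c-w) (a₀-c)) ×ˢ (Ioo (a₀+c-w) (a₀+c)) ∪
            (Ioo (a₀+c-w) (a₀+c)) ×ˢ (Ioo (a₀-c-w) (a₀-c))), g (p.1 - p.2))
        = (∫ p in ((Ioo (a₀-c-w) (a₀-c)) ×ˢ (Ioo (a₀+c-w) (a₀+c)) ∪
            (Ioo (a₀+c-w) (a₀+c)) ×ˢ (Ioo (a₀-c-w) (a₀-c))), θ₁ (p.1 - p.2))
          - (∫ p in ((Ioo (a₀-c-w) (a₀-c)) ×ˢ (Ioo (a₀+c-w) (a₀+c)) ∪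
            (Ioo (a₀+c-w) (a₀+c)) ×ˢ (Ioo (a₀-c-w) (a₀-c))), θ₂ (p.1 - p.2)) := by
          rw [← integral_sub hI1 hI2]
      _ = 0 := by rw [heq, sub_self]
  have gzero : ∀ s : ℝ, 0 < s → g s = 0 := by
    intro s hs
    by_contra h
    rcases lt_or_gt_of_ne h with hneg | hpos
    · refine stmt4_key a₀ (fun r => -g r) gc.neg (fun r => by rw [ge r]) ?_ s hs (by linarith)
      intro c w hw hwc
      rw [integral_neg, hint c w hw hwc, neg_zero]
    · exact stmt4_key a₀ g gc ge hint s hs hpos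
  have gzero_all : ∀ s : ℝ, g s = 0 := by
    have hclosed : IsClosed {x : ℝ | g x = 0} := isClosed_eq gc continuous_const
    have hsub : Ioi (0:ℝ) ⊆ {x : ℝ | g x = 0} := fun x hx => gzero x hx
    have hcl : Ici (0:ℝ) ⊆ {x : ℝ | g x = 0} := by
      rw [← closure_Ioi]; exact closure_minimal hsub hclosed
    intro s
    rcases le_or_gt 0 s with h | h
    · exact hcl h
    · have h1 : g (-s) = 0 := hcl (le_of_lt (neg_pos.mpr h))
      rw [ge s] at h1
      exact h1
  funext x
  have := gzero_all x
  simp only [hgdef] at this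
  linarith
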